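/- Let t ∈ ℚ with t ≠ 0, and let θ_t(z) = t/z², extended to ℙ¹(ℚ) = ℚ ∪ {∞} by θ_t(0) = ∞ and θ_t(∞) = 0. Then the set of rational preperiodic points of θ_t is {0, ∞} if t is not the cube of a rational number, and is {0, ∞, c, −c} if t = c³ for some c ∈ ℚ, c ≠ 0. In the latter case c is a fixed point of θ_t and θ_t(−c) = c. -/

import Mathlib

/-!
Rational preperiodic points of `θ_t(z) = t/z²` for `t ∈ ℚ×`:
they are `{0, ∞}` if `t` is not a rational cube, and `{0, ∞, c, −c}` if
`t = c³` with `c ∈ ℚ×` (in which case `c` is fixed and `−c ↦ c`).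

We model ℙ¹(ℚ) as `Option ℚ`, with `none` playing the role of ∞;
`θ_t(0) = ∞` and `θ_t(∞) = 0`.
-/

/-- The map `θ_t(z) = t/z²` on `ℙ¹(ℚ)`, with `θ_t(0) = ∞` and `θ_t(∞) = 0`. -/
def theta (t : ℚ) : Option ℚ → Option ℚ
  | none => some 0
  | some x => if x = 0 then none else some (t / x ^ 2)

/-- A point is preperiodic for a self-map `f` if two distinct iterates of `f`
agree on it, i.e. its forward orbit is finite. -/
def IsPreperiodicPt {X : Type*} (f : X → X) (α : X) : Prop :=
  ∃ i j : ℕ, i < j ∧ f^[i] α = f^[j] α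

lemma theta_iter (t : ℚ) (ht : t ≠ 0) :
    ∀ (n : ℕ) (x : ℚ), x ≠ 0 → ∃ y : ℚ, y ≠ 0 ∧
      (theta t)^[n] (some x) = some y ∧
      y ^ 3 / t = (x ^ 3 / t) ^ ((-2 : ℤ) ^ n) := by
  intro n
  induction n with
  | zero => intro x hx; exact ⟨x, hx, rfl, by simp⟩
  | succ n ih =>
    intro x hx
    have hx2 : t / x ^ 2 ≠ 0 := div_ne_zero ht (pow_ne_zero _ hx)
    obtain ⟨y, hy, hiter, heq⟩ := ih (t / x ^ 2) hx2
    refine ⟨y, hy, ?_, ?_⟩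
    · rw [Function.iterate_succ_apply]
      have h : theta t (some x) = some (t / x ^ 2) := by simp [theta, hx]
      rw [h, hiter]
    · have h1 : (t / x ^ 2) ^ 3 / t = (x ^ 3 / t) ^ (-2 : ℤ) := by
        have hx3 : x ^ 3 ≠ 0 := pow_ne_zero _ hx
        rw [show ((-2:ℤ)) = -((2:ℕ):ℤ) by norm_num, zpow_neg, zpow_natCast]
        field_simp
      rw [heq, h1, ← zpow_mul]
      congr 1
      rw [pow_succ]
      ring

lemma cube_of_preperiodic (t : ℚ) (ht : t ≠ 0) (x : ℚ) (hx : x ≠ 0)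
    (h : IsPreperiodicPt (theta t) (some x)) : x ^ 3 = t ∨ x ^ 3 = -t := by
  obtain ⟨i, j, hij, heq⟩ := h
  obtain ⟨yi, hyi, hi, hri⟩ := theta_iter t ht i x hx
  obtain ⟨yj, hyj, hj, hrj⟩ := theta_iter t ht j x hx
  rw [hi, hj] at heq
  have hy : yi = yj := by simpa using heq
  set r : ℚ := x ^ 3 / t with hr
  have hr0 : r ≠ 0 := div_ne_zero (pow_ne_zero _ hx) ht
  have hpow : r ^ ((-2 : ℤ) ^ i) = r ^ ((-2 : ℤ) ^ j) := by
    rw [← hri, ← hrj, hy]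
  have hone : r ^ ((-2 : ℤ) ^ i - (-2 : ℤ) ^ j) = 1 := by
    rw [zpow_sub₀ hr0, hpow, div_self (zpow_ne_zero _ hr0)]
  have hm : (-2 : ℤ) ^ i - (-2 : ℤ) ^ j ≠ 0 := by
    intro hc
    have habs : ((-2 : ℤ) ^ i).natAbs = ((-2 : ℤ) ^ j).natAbs := by
      rw [sub_eq_zero] at hc; rw [hc]
    simp only [Int.natAbs_pow] at habs
    norm_num at habs
    exact absurd habs (Nat.ne_of_lt hij)
  have habs1 : |r| = 1 := by
    have : |r| ^ ((-2 : ℤ) ^ i - (-2 : ℤ) ^ j) = 1 := by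
      have h3 : |r ^ ((-2 : ℤ) ^ i - (-2 : ℤ) ^ j)| = |r| ^ ((-2 : ℤ) ^ i - (-2 : ℤ) ^ j) :=
        map_zpow₀ (absHom : ℚ →*₀ ℚ) r ((-2 : ℤ) ^ i - (-2 : ℤ) ^ j)
      rw [← h3, hone, abs_one]
    by_contra hne
    exact hm ((zpow_eq_one_iff_right₀ (abs_nonneg r) hne).1 this)
  have : r = 1 ∨ r = -1 := abs_eq (by norm_num : (0:ℚ) ≤ 1) |>.1 habs1
  rcases this with h1 | h1
  · left; rw [hr, div_eq_iff ht] at h1; linarith [h1]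
  · right; rw [hr, div_eq_iff ht] at h1; linarith [h1]

/-- For `t ∈ ℚ×`, the rational preperiodic points of `θ_t(z) = t/z²` are
`{0, ∞}` when `t` is not a cube in ℚ, and `{0, ∞, c, −c}` when `t = c³` with
`c ≠ 0`; in the latter case `θ_t(c) = c` and `θ_t(−c) = c`. -/
theorem theta_preperiodic_points (t : ℚ) (ht : t ≠ 0) :
    ((¬ ∃ c : ℚ, c ^ 3 = t) →
      {α : Option ℚ | IsPreperiodicPt (theta t) α} =
        ({none, some 0} : Set (Option ℚ))) ∧
    (∀ c : ℚ, c ≠ 0 → c ^ 3 = t →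
      {α : Option ℚ | IsPreperiodicPt (theta t) α} =
          ({none, some 0, some c, some (-c)} : Set (Option ℚ)) ∧
        theta t (some c) = some c ∧ theta t (some (-c)) = some c) := by
  have hcube : ∀ a b : ℚ, a ^ 3 = b ^ 3 → a = b := fun a b h =>
    (Odd.strictMono_pow (by decide : Odd 3)).injective h
  have hθ0 : theta t (some 0) = none := by simp [theta]
  have hθn : theta t none = some 0 := rfl
  have hnone : IsPreperiodicPt (theta t) none :=
    ⟨0, 2, by norm_num, by
      simp [Function.iterate_succ_apply, hθn, hθ0]⟩
  have hzero : IsPreperiodicPt (theta t) (some 0) :=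
    ⟨0, 2, by norm_num, by
      simp [Function.iterate_succ_apply, hθn, hθ0]⟩
  constructor
  · intro hnc
    ext α
    simp only [Set.mem_setOf_eq, Set.mem_insert_iff, Set.mem_singleton_iff]
    constructor
    · intro h
      match α with
      | none => exact Or.inl rfl
      | some x =>
        right
        by_contra hx0
        have hx : x ≠ 0 := fun hc => hx0 (by rw [hc])
        rcases cube_of_preperiodic t ht x hx h with h1 | h1
        · exact hnc ⟨x, h1⟩
        · exact hnc ⟨-x, by rw [Odd.neg_pow (by decide : Odd 3), h1, neg_neg]⟩
    · rintro (rfl | rfl)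
      · exact hnone
      · exact hzero
  · intro c hc hct
    have hfixc : theta t (some c) = some c := by
      simp only [theta, if_neg hc]
      congr 1
      rw [← hct]
      field_simp
    have hmapc : theta t (some (-c)) = some c := by
      have hnc0 : (-c : ℚ) ≠ 0 := neg_ne_zero.2 hc
      simp only [theta, if_neg hnc0]
      congr 1
      rw [← hct]
      field_simp
    refine ⟨?_, hfixc, hmapc⟩
    ext α
    simp only [Set.mem_setOf_eq, Set.mem_insert_iff, Set.mem_singleton_iff]
    constructor
    · intro h
      match α with
      | none => exact Or.inl rfl
      | some x =>
        right
        by_cases hx : x = 0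
        · exact Or.inl (by rw [hx])
        · right
          rcases cube_of_preperiodic t ht x hx h with h1 | h1
          · exact Or.inl (by rw [hcube x c (by rw [h1, hct])])
          · refine Or.inr ?_
            have : x ^ 3 = (-c) ^ 3 := by
              rw [Odd.neg_pow (by decide : Odd 3), hct, h1]
            rw [hcube x (-c) this]
    · rintro (rfl | rfl | rfl | rfl)
      · exact hnone
      · exact hzero
      · exact ⟨0, 1, by norm_num, by simp [Function.iterate_succ_apply, hfixc]⟩
      · exact ⟨1, 2, by norm_num, by
          simp [Function.iterate_succ_apply, hmapc, hfixc]⟩
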